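/- Let C be a strict monoidal category and R a D-structure on C consisting of natural isomorphisms R_X: X → X with R_I = id_I and (R_{X⊗Y}⊗id_Z)(id_X⊗R_{Y⊗Z}) = (id_X⊗R_{Y⊗Z})(R_{X⊗Y}⊗id_Z). Define D¹(R)_{X,Y} := (R_X⊗R_Y)R_{X⊗Y}⁻¹ : X⊗Y → X⊗Y. Then D¹(R) is a strong twine on C. -/

import Mathlib

open CategoryTheory MonoidalCategory

universe v u

/-- A monoidal category is strict when the associators and unitors are `eqToHom`s of
equalities of objects. -/
structure MonStrict (C : Type u) [Category.{v} C] [MonoidalCategory C] : Prop where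
  assocObj : ∀ X Y Z : C, (X ⊗ Y) ⊗ Z = X ⊗ (Y ⊗ Z)
  lidObj : ∀ X : C, 𝟙_ C ⊗ X = X
  ridObj : ∀ X : C, X ⊗ 𝟙_ C = X
  assocHom : ∀ X Y Z : C, (α_ X Y Z).hom = eqToHom (assocObj X Y Z)
  lidHom : ∀ X : C, (λ_ X).hom = eqToHom (lidObj X)
  ridHom : ∀ X : C, (ρ_ X).hom = eqToHom (ridObj X)

variable {C : Type u} [Category.{v} C] [MonoidalCategory C]

/-- Transport of an endomorphism along an equality of objects of a strict monoidal
category. -/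
def cE {X Y : C} (h : X = Y) (f : Y ⟶ Y) : X ⟶ X := eqToHom h ≫ f ≫ eqToHom h.symm

/-- A pure-braided structure on a strict monoidal category: two families of natural
isomorphisms `A, B : U ⊗ V ⊗ W ≅ U ⊗ V ⊗ W` satisfying the pure-braided axioms. -/
structure PureBraided (C : Type u) [Category.{v} C] [MonoidalCategory C]
    (hS : MonStrict C) where
  A : ∀ U V W : C, U ⊗ (V ⊗ W) ≅ U ⊗ (V ⊗ W)
  B : ∀ U V W : C, U ⊗ (V ⊗ W) ≅ U ⊗ (V ⊗ W)
  natA : ∀ {U V W U' V' W' : C} (f : U ⟶ U') (g : V ⟶ V') (h : W ⟶ W'),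
    (f ⊗ₘ (g ⊗ₘ h)) ≫ (A U' V' W').hom = (A U V W).hom ≫ (f ⊗ₘ (g ⊗ₘ h))
  natB : ∀ {U V W U' V' W' : C} (f : U ⟶ U') (g : V ⟶ V') (h : W ⟶ W'),
    (f ⊗ₘ (g ⊗ₘ h)) ≫ (B U' V' W').hom = (B U V W).hom ≫ (f ⊗ₘ (g ⊗ₘ h))
  /-- `A_{U⊗V,W,X} = A_{U,V⊗W,X}(id_U ⊗ A_{V,W,X})` -/
  a1 : ∀ U V W X : C, (A (U ⊗ V) W X).hom =
    cE (by simp [hS.assocObj]) ((𝟙 U ⊗ₘ (A V W X).hom) ≫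
      cE (by simp [hS.assocObj]) (A U (V ⊗ W) X).hom)
  /-- `A_{U,V,W⊗X} = (A_{U,V,W} ⊗ id_X) A_{U,V⊗W,X}` -/
  a2 : ∀ U V W X : C, (A U V (W ⊗ X)).hom =
    cE (by simp [hS.assocObj]) ((cE (by simp [hS.assocObj]) (A U (V ⊗ W) X).hom) ≫
      ((A U V W).hom ⊗ₘ 𝟙 X))
  /-- `B_{U⊗V,W,X} = (id_U ⊗ B_{V,W,X}) B_{U,V⊗W,X}` -/
  baba : ∀ U V W X : C, (B (U ⊗ V) W X).hom =
    cE (by simp [hS.assocObj]) ((cE (by simp [hS.assocObj]) (B U (V ⊗ W) X).hom) ≫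
      (𝟙 U ⊗ₘ (B V W X).hom))
  /-- `B_{U,V,W⊗X} = B_{U,V⊗W,X}(B_{U,V,W} ⊗ id_X)` -/
  b2 : ∀ U V W X : C, (B U V (W ⊗ X)).hom =
    cE (by simp [hS.assocObj]) (((B U V W).hom ⊗ₘ 𝟙 X) ≫
      cE (by simp [hS.assocObj]) (B U (V ⊗ W) X).hom)
  /-- `(A_{U,V,W} ⊗ id_X)(id_U ⊗ B_{V,W,X}) = (id_U ⊗ B_{V,W,X})(A_{U,V,W} ⊗ id_X)` -/
  cab : ∀ U V W X : C,
    cE (by simp [hS.assocObj]) (𝟙 U ⊗ₘ (B V W X).hom) ≫ ((A U V W).hom ⊗ₘ 𝟙 X)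
    = ((A U V W).hom ⊗ₘ 𝟙 X) ≫ cE (by simp [hS.assocObj]) (𝟙 U ⊗ₘ (B V W X).hom)
  /-- `A_{U,I,V} = B_{U,I,V}` -/
  t1t : ∀ U V : C, A U (𝟙_ C) V = B U (𝟙_ C) V

/-- A twine on a strict monoidal category. -/
structure Twine (C : Type u) [Category.{v} C] [MonoidalCategory C]
    (hS : MonStrict C) where
  D : ∀ X Y : C, X ⊗ Y ≅ X ⊗ Y
  nat : ∀ {X Y X' Y' : C} (f : X ⟶ X') (g : Y ⟶ Y'),
    (f ⊗ₘ g) ≫ (D X' Y').hom = (D X Y).hom ≫ (f ⊗ₘ g)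
  unit : (D (𝟙_ C) (𝟙_ C)).hom = 𝟙 (𝟙_ C ⊗ 𝟙_ C)
  /-- `(D_{X,Y} ⊗ id_Z) D_{X⊗Y,Z} = (id_X ⊗ D_{Y,Z}) D_{X,Y⊗Z}` -/
  fus : ∀ X Y Z : C, (D (X ⊗ Y) Z).hom ≫ ((D X Y).hom ⊗ₘ 𝟙 Z)
    = cE (by simp [hS.assocObj]) ((D X (Y ⊗ Z)).hom ≫ (𝟙 X ⊗ₘ (D Y Z).hom))
  /-- the entwining axiom -/
  ent : ∀ X Y Z T : C,
    cE (by simp [hS.assocObj]) (𝟙 X ⊗ₘ (D Y (Z ⊗ T)).hom) ≫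
      cE (by simp [hS.assocObj]) (𝟙 X ⊗ₘ ((D Y Z).inv ⊗ₘ 𝟙 T)) ≫
        ((D (X ⊗ Y) Z).hom ⊗ₘ 𝟙 T)
    = ((D (X ⊗ Y) Z).hom ⊗ₘ 𝟙 T) ≫
        cE (by simp [hS.assocObj]) (𝟙 X ⊗ₘ ((D Y Z).inv ⊗ₘ 𝟙 T)) ≫
          cE (by simp [hS.assocObj]) (𝟙 X ⊗ₘ (D Y (Z ⊗ T)).hom)

/-- A strong twine on a strict monoidal category. -/
structure StrongTwine (C : Type u) [Category.{v} C] [MonoidalCategory C]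
    (hS : MonStrict C) where
  D : ∀ X Y : C, X ⊗ Y ≅ X ⊗ Y
  nat : ∀ {X Y X' Y' : C} (f : X ⟶ X') (g : Y ⟶ Y'),
    (f ⊗ₘ g) ≫ (D X' Y').hom = (D X Y).hom ≫ (f ⊗ₘ g)
  unit : (D (𝟙_ C) (𝟙_ C)).hom = 𝟙 (𝟙_ C ⊗ 𝟙_ C)
  /-- `(T_{U,V} ⊗ id_W) T_{U⊗V,W} = (id_U ⊗ T_{V,W}) T_{U,V⊗W}` -/
  fus : ∀ X Y Z : C, (D (X ⊗ Y) Z).hom ≫ ((D X Y).hom ⊗ₘ 𝟙 Z)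
    = cE (by simp [hS.assocObj]) ((D X (Y ⊗ Z)).hom ≫ (𝟙 X ⊗ₘ (D Y Z).hom))
  /-- `(T_{U,V} ⊗ id_W)(id_U ⊗ T_{V,W}) = (id_U ⊗ T_{V,W})(T_{U,V} ⊗ id_W)` -/
  comm : ∀ X Y Z : C,
    cE (by simp [hS.assocObj]) (𝟙 X ⊗ₘ (D Y Z).hom) ≫ ((D X Y).hom ⊗ₘ 𝟙 Z)
    = ((D X Y).hom ⊗ₘ 𝟙 Z) ≫ cE (by simp [hS.assocObj]) (𝟙 X ⊗ₘ (D Y Z).hom)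

/-- A D-structure (consisting of isomorphisms) on a strict monoidal category. -/
structure DStructure (C : Type u) [Category.{v} C] [MonoidalCategory C]
    (hS : MonStrict C) where
  R : ∀ X : C, X ≅ X
  nat : ∀ {X Y : C} (f : X ⟶ Y), f ≫ (R Y).hom = (R X).hom ≫ f
  unit : (R (𝟙_ C)).hom = 𝟙 (𝟙_ C)
  /-- `(R_{X⊗Y} ⊗ id_Z)(id_X ⊗ R_{Y⊗Z}) = (id_X ⊗ R_{Y⊗Z})(R_{X⊗Y} ⊗ id_Z)` -/
  comm : ∀ X Y Z : C,
    cE (by simp [hS.assocObj]) (𝟙 X ⊗ₘ (R (Y ⊗ Z)).hom) ≫ ((R (X ⊗ Y)).hom ⊗ₘ 𝟙 Z)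
    = ((R (X ⊗ Y)).hom ⊗ₘ 𝟙 Z) ≫ cE (by simp [hS.assocObj]) (𝟙 X ⊗ₘ (R (Y ⊗ Z)).hom)

lemma Rnat_inv {hS : MonStrict C} (R : DStructure C hS) {X Y : C} (f : X ⟶ Y) :
    f ≫ (R.R Y).inv = (R.R X).inv ≫ f := by
  rw [Iso.comp_inv_eq, Category.assoc, R.nat f, Iso.inv_hom_id_assoc]

lemma eAssoc (hS : MonStrict C) {X Y Z : C} (h : (X ⊗ Y) ⊗ Z = X ⊗ (Y ⊗ Z))
    (f : X ⟶ X) (g : Y ⟶ Y) (k : Z ⟶ Z) :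
    ((f ⊗ₘ g) ⊗ₘ k) ≫ eqToHom h = eqToHom h ≫ (f ⊗ₘ (g ⊗ₘ k)) := by
  have he : eqToHom h = (α_ X Y Z).hom := (hS.assocHom X Y Z).symm
  rw [he]; exact associator_naturality f g k

lemma comm_inv_left {A : C} (p : A ≅ A) (q : A ⟶ A) (h : p.hom ≫ q = q ≫ p.hom) :
    p.inv ≫ q = q ≫ p.inv := by
  rw [Iso.inv_comp_eq, ← Category.assoc, h, Category.assoc, Iso.hom_inv_id,
    Category.comp_id]

lemma cE_comp {X Y : C} (h : X = Y) (f g : Y ⟶ Y) :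
    cE h (f ≫ g) = cE h f ≫ cE h g := by
  simp [cE]

lemma cE_id {X Y : C} (h : X = Y) : cE h (𝟙 Y) = 𝟙 X := by
  simp [cE]

lemma cE_comm {A B : C} (h : A = B) (u w : B ⟶ B) (v : A ⟶ A)
    (hw : cE h w = v) (huw : u ≫ w = w ≫ u) :
    cE h u ≫ v = v ≫ cE h u := by
  rw [← hw, ← cE_comp, huw, cE_comp]

lemma cE_tensor (hS : MonStrict C) {X Y Z : C} (h : (X ⊗ Y) ⊗ Z = X ⊗ (Y ⊗ Z))
    (f : X ⟶ X) (g : Y ⟶ Y) (k : Z ⟶ Z) :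
    cE h (f ⊗ₘ (g ⊗ₘ k)) = (f ⊗ₘ g) ⊗ₘ k := by
  rw [cE, ← Category.assoc, ← eAssoc hS h f g k]
  simp

set_option maxHeartbeats 1600000 in
/-- A D-structure `R` consisting of isomorphisms gives rise to the strong twine
`D¹(R)_{X,Y} = (R_X ⊗ₘ R_Y) R_{X⊗Y}⁻¹`. -/
theorem stmt15 (hS : MonStrict C) (R : DStructure C hS) :
    ∃ T : StrongTwine C hS, ∀ X Y : C,
      (T.D X Y).hom = (R.R (X ⊗ Y)).inv ≫ ((R.R X).hom ⊗ₘ (R.R Y).hom) := by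
  refine ⟨⟨fun X Y => ⟨(R.R (X ⊗ Y)).inv ≫ ((R.R X).hom ⊗ₘ (R.R Y).hom),
      ((R.R X).inv ⊗ₘ (R.R Y).inv) ≫ (R.R (X ⊗ Y)).hom, ?_, ?_⟩, ?_, ?_, ?_, ?_⟩,
    fun X Y => rfl⟩
  · simp [tensorHom_comp_tensorHom]
  · simp [tensorHom_comp_tensorHom]
  · -- naturality
    intro X Y X' Y' f g
    dsimp only
    rw [← Category.assoc, Rnat_inv R (f ⊗ₘ g), Category.assoc, Category.assoc,
      tensorHom_comp_tensorHom, tensorHom_comp_tensorHom, R.nat f, R.nat g, ← tensorHom_comp_tensorHom]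
  · -- unit
    dsimp only
    have h : (𝟙_ C ⊗ 𝟙_ C : C) = 𝟙_ C := hS.ridObj _
    have hnat := R.nat (eqToHom h)
    rw [R.unit, Category.comp_id] at hnat
    have hh : (R.R (𝟙_ C ⊗ 𝟙_ C)).hom = 𝟙 _ := by
      have h2 := congrArg (· ≫ eqToHom h.symm) hnat
      simpa using h2.symm
    have hI : R.R (𝟙_ C ⊗ 𝟙_ C) = Iso.refl _ := Iso.ext hh
    rw [R.unit, id_tensorHom_id, Category.comp_id, hI]
    rfl
  · -- fus
    intro X Y Z
    dsimp only
    have ha : (X ⊗ Y) ⊗ Z = X ⊗ (Y ⊗ Z) := by simp [hS.assocObj]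
    show ((R.R ((X ⊗ Y) ⊗ Z)).inv ≫ ((R.R (X ⊗ Y)).hom ⊗ₘ (R.R Z).hom)) ≫
        (((R.R (X ⊗ Y)).inv ≫ ((R.R X).hom ⊗ₘ (R.R Y).hom)) ⊗ₘ 𝟙 Z)
      = cE ha (((R.R (X ⊗ (Y ⊗ Z))).inv ≫ ((R.R X).hom ⊗ₘ (R.R (Y ⊗ Z)).hom)) ≫
        (𝟙 X ⊗ₘ ((R.R (Y ⊗ Z)).inv ≫ ((R.R Y).hom ⊗ₘ (R.R Z).hom))))
    have lhs' : ((R.R ((X ⊗ Y) ⊗ Z)).inv ≫ ((R.R (X ⊗ Y)).hom ⊗ₘ (R.R Z).hom)) ≫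
        (((R.R (X ⊗ Y)).inv ≫ ((R.R X).hom ⊗ₘ (R.R Y).hom)) ⊗ₘ 𝟙 Z)
        = (R.R ((X ⊗ Y) ⊗ Z)).inv ≫ (((R.R X).hom ⊗ₘ (R.R Y).hom) ⊗ₘ (R.R Z).hom) := by
      rw [Category.assoc, tensorHom_comp_tensorHom, Category.comp_id, Iso.hom_inv_id_assoc]
    have inner : ((R.R (X ⊗ (Y ⊗ Z))).inv ≫ ((R.R X).hom ⊗ₘ (R.R (Y ⊗ Z)).hom)) ≫
        (𝟙 X ⊗ₘ ((R.R (Y ⊗ Z)).inv ≫ ((R.R Y).hom ⊗ₘ (R.R Z).hom)))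
        = (R.R (X ⊗ (Y ⊗ Z))).inv ≫ ((R.R X).hom ⊗ₘ ((R.R Y).hom ⊗ₘ (R.R Z).hom)) := by
      rw [Category.assoc, tensorHom_comp_tensorHom, Category.comp_id, Iso.hom_inv_id_assoc]
    rw [lhs', inner, cE_comp, cE_tensor hS ha]
    congr 1
    show (R.R ((X ⊗ Y) ⊗ Z)).inv = cE ha (R.R (X ⊗ (Y ⊗ Z))).inv
    rw [cE, ← Category.assoc, Rnat_inv R (eqToHom ha)]
    simp
  · -- comm
    intro X Y Z
    dsimp only
    have ha : (X ⊗ Y) ⊗ Z = X ⊗ (Y ⊗ Z) := by simp [hS.assocObj]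
    show cE ha (𝟙 X ⊗ₘ ((R.R (Y ⊗ Z)).inv ≫ ((R.R Y).hom ⊗ₘ (R.R Z).hom))) ≫
        (((R.R (X ⊗ Y)).inv ≫ ((R.R X).hom ⊗ₘ (R.R Y).hom)) ⊗ₘ 𝟙 Z)
      = (((R.R (X ⊗ Y)).inv ≫ ((R.R X).hom ⊗ₘ (R.R Y).hom)) ⊗ₘ 𝟙 Z) ≫
        cE ha (𝟙 X ⊗ₘ ((R.R (Y ⊗ Z)).inv ≫ ((R.R Y).hom ⊗ₘ (R.R Z).hom)))
    have hcomm : cE ha (𝟙 X ⊗ₘ (R.R (Y ⊗ Z)).hom) ≫ ((R.R (X ⊗ Y)).hom ⊗ₘ 𝟙 Z)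
        = ((R.R (X ⊗ Y)).hom ⊗ₘ 𝟙 Z) ≫ cE ha (𝟙 X ⊗ₘ (R.R (Y ⊗ Z)).hom) := R.comm X Y Z
    have hPIi : cE ha (𝟙 X ⊗ₘ (R.R (Y ⊗ Z)).hom) ≫ cE ha (𝟙 X ⊗ₘ (R.R (Y ⊗ Z)).inv)
        = 𝟙 _ := by
      rw [← cE_comp, tensorHom_comp_tensorHom, Iso.hom_inv_id, Category.comp_id, id_tensorHom_id, cE_id]
    have hPIi' : cE ha (𝟙 X ⊗ₘ (R.R (Y ⊗ Z)).inv) ≫ cE ha (𝟙 X ⊗ₘ (R.R (Y ⊗ Z)).hom)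
        = 𝟙 _ := by
      rw [← cE_comp, tensorHom_comp_tensorHom, Iso.inv_hom_id, Category.comp_id, id_tensorHom_id, cE_id]
    have hQIi : ((R.R (X ⊗ Y)).hom ⊗ₘ 𝟙 Z) ≫ ((R.R (X ⊗ Y)).inv ⊗ₘ 𝟙 Z) = 𝟙 _ := by
      rw [tensorHom_comp_tensorHom]; simp
    have hQIi' : ((R.R (X ⊗ Y)).inv ⊗ₘ 𝟙 Z) ≫ ((R.R (X ⊗ Y)).hom ⊗ₘ 𝟙 Z) = 𝟙 _ := by
      rw [tensorHom_comp_tensorHom]; simp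
    have hPQ : cE ha (𝟙 X ⊗ₘ (R.R (Y ⊗ Z)).inv) ≫ ((R.R (X ⊗ Y)).hom ⊗ₘ 𝟙 Z)
        = ((R.R (X ⊗ Y)).hom ⊗ₘ 𝟙 Z) ≫ cE ha (𝟙 X ⊗ₘ (R.R (Y ⊗ Z)).inv) :=
      comm_inv_left ⟨cE ha (𝟙 X ⊗ₘ (R.R (Y ⊗ Z)).hom),
        cE ha (𝟙 X ⊗ₘ (R.R (Y ⊗ Z)).inv), hPIi, hPIi'⟩ _ hcomm
    have hQQ : cE ha (𝟙 X ⊗ₘ (R.R (Y ⊗ Z)).inv) ≫ ((R.R (X ⊗ Y)).inv ⊗ₘ 𝟙 Z)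
        = ((R.R (X ⊗ Y)).inv ⊗ₘ 𝟙 Z) ≫ cE ha (𝟙 X ⊗ₘ (R.R (Y ⊗ Z)).inv) :=
      (comm_inv_left ⟨(R.R (X ⊗ Y)).hom ⊗ₘ 𝟙 Z, (R.R (X ⊗ Y)).inv ⊗ₘ 𝟙 Z,
        hQIi, hQIi'⟩ _ hPQ.symm).symm
    -- Pv commutes with (R_X ⊗ₘ R_Y) ⊗ₘ 𝟙 Z
    have hN : cE ha (𝟙 X ⊗ₘ (R.R (Y ⊗ Z)).inv) ≫ (((R.R X).hom ⊗ₘ (R.R Y).hom) ⊗ₘ 𝟙 Z)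
        = (((R.R X).hom ⊗ₘ (R.R Y).hom) ⊗ₘ 𝟙 Z) ≫ cE ha (𝟙 X ⊗ₘ (R.R (Y ⊗ Z)).inv) := by
      refine cE_comm ha _ ((R.R X).hom ⊗ₘ ((R.R Y).hom ⊗ₘ 𝟙 Z)) _
        (cE_tensor hS ha _ _ _) ?_
      rw [tensorHom_comp_tensorHom, tensorHom_comp_tensorHom, Rnat_inv R ((R.R Y).hom ⊗ₘ 𝟙 Z),
        Category.comp_id, Category.id_comp]
    -- M commutes with Qv and with N
    have hM : ((𝟙 X ⊗ₘ (R.R Y).hom) ⊗ₘ (R.R Z).hom) ≫ ((R.R (X ⊗ Y)).inv ⊗ₘ 𝟙 Z)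
        = ((R.R (X ⊗ Y)).inv ⊗ₘ 𝟙 Z) ≫ ((𝟙 X ⊗ₘ (R.R Y).hom) ⊗ₘ (R.R Z).hom) := by
      rw [tensorHom_comp_tensorHom, tensorHom_comp_tensorHom, Rnat_inv R (𝟙 X ⊗ₘ (R.R Y).hom),
        Category.comp_id, Category.id_comp]
    have hMN : ((𝟙 X ⊗ₘ (R.R Y).hom) ⊗ₘ (R.R Z).hom) ≫ (((R.R X).hom ⊗ₘ (R.R Y).hom) ⊗ₘ 𝟙 Z)
        = (((R.R X).hom ⊗ₘ (R.R Y).hom) ⊗ₘ 𝟙 Z) ≫ ((𝟙 X ⊗ₘ (R.R Y).hom) ⊗ₘ (R.R Z).hom) := by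
      rw [tensorHom_comp_tensorHom, tensorHom_comp_tensorHom, tensorHom_comp_tensorHom, tensorHom_comp_tensorHom]
      simp
    have hsplit : cE ha (𝟙 X ⊗ₘ ((R.R (Y ⊗ Z)).inv ≫ ((R.R Y).hom ⊗ₘ (R.R Z).hom)))
        = cE ha (𝟙 X ⊗ₘ (R.R (Y ⊗ Z)).inv) ≫ ((𝟙 X ⊗ₘ (R.R Y).hom) ⊗ₘ (R.R Z).hom) := by
      have hsp : (𝟙 X ⊗ₘ ((R.R (Y ⊗ Z)).inv ≫ ((R.R Y).hom ⊗ₘ (R.R Z).hom)))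
          = (𝟙 X ⊗ₘ (R.R (Y ⊗ Z)).inv) ≫ (𝟙 X ⊗ₘ ((R.R Y).hom ⊗ₘ (R.R Z).hom)) := by
        rw [tensorHom_comp_tensorHom, Category.comp_id]
      rw [hsp, cE_comp, cE_tensor hS ha]
    have hD : (((R.R (X ⊗ Y)).inv ≫ ((R.R X).hom ⊗ₘ (R.R Y).hom)) ⊗ₘ 𝟙 Z)
        = ((R.R (X ⊗ Y)).inv ⊗ₘ 𝟙 Z) ≫ (((R.R X).hom ⊗ₘ (R.R Y).hom) ⊗ₘ 𝟙 Z) := by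
      rw [tensorHom_comp_tensorHom, Category.comp_id]
    rw [hsplit, hD]
    simp only [Category.assoc]
    conv_lhs => rw [← Category.assoc ((𝟙 X ⊗ₘ (R.R Y).hom) ⊗ₘ (R.R Z).hom), hM,
      Category.assoc, hMN, ← Category.assoc (cE ha (𝟙 X ⊗ₘ (R.R (Y ⊗ Z)).inv)), hQQ,
      Category.assoc, ← Category.assoc (cE ha (𝟙 X ⊗ₘ (R.R (Y ⊗ Z)).inv)), hN,
      Category.assoc]
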